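/- Let Γ be a hyperbolic group with metric d ∈ D(Γ). Suppose φ, ψ ∈ ℂ[Γ] are supported in the annuli A_{R,h} and A_{R',h'} respectively. Then the restriction of φ*ψ to A_{R'',h''} satisfies ‖(φ*ψ)|_{A_{R'',h''}}‖₂ ≤ C ‖φ‖₂ ‖ψ‖₂, with C depending only on h, h', h'' and (Γ,d), uniformly in R, R', R''. -/

import Mathlib

set_option maxHeartbeats 2000000

open Finset

private lemma sum_le_of_support' {Γ : Type*} [DecidableEq Γ] {T S : Finset Γ} (F : Γ → ℝ)
    (hF : ∀ z, 0 ≤ F z) (hsupp : ∀ z, F z ≠ 0 → z ∈ S) :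
    ∑ z ∈ T, F z ≤ ∑ z ∈ S, F z := by
  calc ∑ z ∈ T, F z = ∑ z ∈ T.filter (· ∈ S), F z :=
        (Finset.sum_filter_of_ne (fun z _ hz => hsupp z hz)).symm
    _ ≤ ∑ z ∈ S, F z :=
        Finset.sum_le_sum_of_subset_of_nonneg
          (fun z hz => (Finset.mem_filter.1 hz).2) (fun z hz _ => hF z)

private lemma minkowski_two {κ : Type*} (G : Finset κ) (F H : κ → ℝ)
    (hF : ∀ g, 0 ≤ F g) (hH : ∀ g, 0 ≤ H g) :
    Real.sqrt (∑ g ∈ G, (F g + H g)^2) ≤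
      Real.sqrt (∑ g ∈ G, F g ^2) + Real.sqrt (∑ g ∈ G, H g ^2) := by
  have hFH : ∑ g ∈ G, F g * H g ≤
      Real.sqrt (∑ g ∈ G, F g ^2) * Real.sqrt (∑ g ∈ G, H g ^2) :=
    Real.sum_mul_le_sqrt_mul_sqrt G F H
  have h2 : ∑ g ∈ G, (F g + H g)^2 ≤
      (Real.sqrt (∑ g ∈ G, F g ^2) + Real.sqrt (∑ g ∈ G, H g ^2))^2 := by
    have e1 : ∑ g ∈ G, (F g + H g)^2
        = ∑ g ∈ G, F g ^2 + 2 * ∑ g ∈ G, F g * H g + ∑ g ∈ G, H g ^2 := by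
      rw [Finset.mul_sum, ← Finset.sum_add_distrib, ← Finset.sum_add_distrib]
      exact Finset.sum_congr rfl (fun g _ => by ring)
    have s1 : Real.sqrt (∑ g ∈ G, F g ^2) ^2 = ∑ g ∈ G, F g ^2 :=
      Real.sq_sqrt (Finset.sum_nonneg fun g _ => sq_nonneg _)
    have s2 : Real.sqrt (∑ g ∈ G, H g ^2) ^2 = ∑ g ∈ G, H g ^2 :=
      Real.sq_sqrt (Finset.sum_nonneg fun g _ => sq_nonneg _)
    nlinarith [hFH]
  calc Real.sqrt (∑ g ∈ G, (F g + H g)^2)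
      ≤ Real.sqrt ((Real.sqrt (∑ g ∈ G, F g ^2) + Real.sqrt (∑ g ∈ G, H g ^2))^2) :=
        Real.sqrt_le_sqrt h2
    _ = _ := Real.sqrt_sq (by positivity)

private lemma minkowski_finset {ι κ : Type*} (B : Finset ι) (G : Finset κ) (F : ι → κ → ℝ)
    (hF : ∀ b g, 0 ≤ F b g) :
    Real.sqrt (∑ g ∈ G, (∑ b ∈ B, F b g)^2) ≤ ∑ b ∈ B, Real.sqrt (∑ g ∈ G, F b g ^2) := by
  induction B using Finset.cons_induction with
  | empty => simp
  | cons a B ha ih =>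
      have e : ∀ g, ∑ b ∈ Finset.cons a B ha, F b g = F a g + ∑ b ∈ B, F b g := by
        intro g; rw [Finset.sum_cons]
      simp_rw [e, Finset.sum_cons]
      calc Real.sqrt (∑ g ∈ G, (F a g + ∑ b ∈ B, F b g)^2)
          ≤ Real.sqrt (∑ g ∈ G, F a g ^2) + Real.sqrt (∑ g ∈ G, (∑ b ∈ B, F b g)^2) :=
            minkowski_two G _ _ (fun g => hF a g)
              (fun g => Finset.sum_nonneg fun b _ => hF b g)
        _ ≤ _ := by exact add_le_add (le_refl _) ih


/-- Annular convolution estimate (Lemma 2.7): if `φ`, `ψ` are finitely supported in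
the annuli `A_{R,h}`, `A_{R',h'}`, then the restriction of `φ*ψ` to `A_{R'',h''}`
satisfies `‖(φ*ψ)|_{A_{R'',h''}}‖₂ ≤ C ‖φ‖₂ ‖ψ‖₂` with `C` depending only on
`h, h', h''` and the geometry, uniformly in `R, R', R''`. -/
theorem annular_convolution_estimate {Γ : Type*} [Group Γ]
    (d : Γ → Γ → ℝ) (δ c : ℝ)
    (hd_symm : ∀ x y, d x y = d y x)
    (hd_tri : ∀ x y z, d x z ≤ d x y + d y z)
    (hd_inv : ∀ k x y, d (k * x) (k * y) = d x y)
    (hhyp : ∀ x y z : Γ, (d 1 x + d 1 y - d x y) / 2 ≥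
      min ((d 1 x + d 1 z - d x z) / 2) ((d 1 z + d 1 y - d z y) / 2) - δ)
    (hrough : ∀ x y : Γ, ∃ (ℓ : ℝ) (γ : ℝ → Γ), 0 ≤ ℓ ∧ γ 0 = x ∧ γ ℓ = y ∧
      ∀ s t : ℝ, s ∈ Set.Icc 0 ℓ → t ∈ Set.Icc 0 ℓ → abs (d (γ s) (γ t) - abs (s - t)) ≤ c)
    (K ω : ℝ) (hω : 1 < ω)
    (hgrowth : ∀ (x : Γ) (r : ℝ), ∃ s : Finset Γ,
      (↑s : Set Γ) = {y : Γ | d x y ≤ r} ∧ (s.card : ℝ) ≤ K * ω ^ r)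
    (h h' h'' : ℝ) :
    ∃ C : ℝ, ∀ (R R' R'' : ℝ) (φ ψ : Γ → ℂ),
      (Function.support φ).Finite → (Function.support ψ).Finite →
      (∀ x, φ x ≠ 0 → d 1 x ∈ Set.Icc (R - h) (R + h)) →
      (∀ x, ψ x ≠ 0 → d 1 x ∈ Set.Icc (R' - h') (R' + h')) →
      Real.sqrt (∑' g : Γ, (if d 1 g ∈ Set.Icc (R'' - h'') (R'' + h'') then
          ‖∑' x, φ x * ψ (x⁻¹ * g)‖ ^ 2 else 0)) ≤
        C * Real.sqrt (∑' g : Γ, ‖φ g‖ ^ 2) * Real.sqrt (∑' g : Γ, ‖ψ g‖ ^ 2) := by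
  classical
  -- basic facts
  have hd11 : 0 ≤ d 1 1 := by have := hd_tri 1 1 1; linarith
  have hdxx : ∀ x : Γ, d x x = d 1 1 := by
    intro x
    have := hd_inv x⁻¹ x x
    simpa using this.symm
  have hdnn : ∀ x y : Γ, 0 ≤ d x y := by
    intro x y
    have h1 := hd_tri x y x
    have h2 := hdxx x
    have h3 := hd_symm x y
    linarith
  have hδ : 0 ≤ δ := by
    have := hhyp 1 1 1
    simp at this
    linarith
  have hc : 0 ≤ c := by
    obtain ⟨ℓ, γ, hℓ, h0, hl, hdd⟩ := hrough 1 1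
    have := hdd 0 0 ⟨le_refl _, hℓ⟩ ⟨le_refl _, hℓ⟩
    exact le_trans (abs_nonneg _) this
  have hω0 : (0:ℝ) < ω := by linarith
  have hK : 0 < K := by
    obtain ⟨s, hs, hcard⟩ := hgrowth 1 (d 1 1)
    have h1 : (1:Γ) ∈ s := by
      rw [← Finset.mem_coe, hs]; exact Set.mem_setOf.2 (le_refl _)
    have hc1 : (1:ℝ) ≤ s.card := by exact_mod_cast Finset.card_pos.2 ⟨1, h1⟩
    have hpos : (0:ℝ) < ω ^ (d 1 1) := Real.rpow_pos_of_pos hω0 _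
    nlinarith
  -- translated hyperbolicity
  have hhyp' : ∀ w x y z : Γ, (d w x + d w y - d x y)/2 ≥
      min ((d w x + d w z - d x z)/2) ((d w z + d w y - d z y)/2) - δ := by
    intro w x y z
    have e1 : ∀ a : Γ, d w a = d 1 (w⁻¹ * a) := by
      intro a
      have := hd_inv w⁻¹ w a
      simpa using this.symm
    have e2 : ∀ a b : Γ, d a b = d (w⁻¹ * a) (w⁻¹ * b) := fun a b => (hd_inv w⁻¹ a b).symm
    rw [e1 x, e1 y, e1 z, e2 x y, e2 x z, e2 z y]
    exact hhyp _ _ _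
  -- ball cardinality
  have hball : ∀ (x : Γ) (r : ℝ) (T : Finset Γ), (∀ y ∈ T, d x y ≤ r) →
      (T.card : ℝ) ≤ K * ω ^ r := by
    intro x r T hT
    obtain ⟨s, hs, hcard⟩ := hgrowth x r
    have hsub : T ⊆ s := by
      intro y hy
      rw [← Finset.mem_coe, hs]
      exact hT y hy
    calc (T.card : ℝ) ≤ (s.card : ℝ) := by exact_mod_cast Finset.card_le_card hsub
      _ ≤ _ := hcard
  -- two-point lemma
  have htwo : ∀ (g u u' : Γ) (e₁ e₂ : ℝ),
      (d u 1 + d u g - d 1 g)/2 ≤ e₁ → (d u' 1 + d u' g - d 1 g)/2 ≤ e₁ →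
      d 1 u ≤ d 1 u' + e₂ → d 1 u' ≤ d 1 u + e₂ → d u u' ≤ 4*e₁ + e₂ + 2*δ := by
    intro g u u' e₁ e₂ h1 h2 h3 h4
    have H := hhyp' u 1 g u'
    have he₁ : 0 ≤ e₁ := by
      have := hd_tri 1 u g
      have := hd_symm u 1
      linarith
    have tA : (d u u' - e₂)/2 ≤ (d u 1 + d u u' - d 1 u')/2 := by
      have := hd_symm u 1
      linarith
    have tB : (d u u' - e₂ - 2*e₁)/2 ≤ (d u u' + d u g - d u' g)/2 := by
      have t1 := hd_tri 1 u g
      have t2 := hd_symm u' 1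
      linarith
    have hmin : (d u u' - e₂ - 2*e₁)/2 ≤
        min ((d u 1 + d u u' - d 1 u')/2) ((d u u' + d u g - d u' g)/2) := by
      apply le_min
      · linarith
      · linarith
    linarith [hmin, H, h1]
  -- aligned annuli convolution bound
  have haligned : ∀ (p q w w' : ℝ) (α β : Γ → ℝ) (Sα Sβ G : Finset Γ),
      (∀ v, 0 ≤ α v) → (∀ z, 0 ≤ β z) →
      (∀ v, α v ≠ 0 → |d 1 v - p| ≤ w) → (∀ z, β z ≠ 0 → |d 1 z - q| ≤ w) →
      (∀ z, β z ≠ 0 → z ∈ Sβ) → (∀ g ∈ G, |d 1 g - (p+q)| ≤ w') →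
      ∑ g ∈ G, (∑ v ∈ Sα, α v * β (v⁻¹*g))^2 ≤
        (K * ω ^ (6*w + 2*w' + 2*δ)) * ((∑ v ∈ Sα, α v^2) * (∑ z ∈ Sβ, β z^2)) := by
    intro p q w w' α β Sα Sβ G hαnn hβnn hαs hβs hβS hG
    have hN1 : (0:ℝ) < K * ω ^ (6*w + 2*w' + 2*δ) :=
      mul_pos hK (Real.rpow_pos_of_pos hω0 _)
    have key : ∀ g ∈ G, (∑ v ∈ Sα, α v * β (v⁻¹*g))^2 ≤
        (K * ω ^ (6*w + 2*w' + 2*δ)) * ∑ v ∈ Sα, α v^2 * β (v⁻¹*g)^2 := by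
      intro g hg
      set Sg := Sα.filter (fun v => α v * β (v⁻¹*g) ≠ 0) with hSgdef
      have e1 : ∑ v ∈ Sα, α v * β (v⁻¹*g) = ∑ v ∈ Sg, α v * β (v⁻¹*g) :=
        (Finset.sum_filter_of_ne (fun v _ hv => hv)).symm
      have hcard : (Sg.card : ℝ) ≤ K * ω ^ (6*w + 2*w' + 2*δ) := by
        rcases Sg.eq_empty_or_nonempty with he | ⟨v₁, hv₁⟩
        · rw [he]; simpa using le_of_lt hN1
        · apply hball v₁
          intro v hv
          have hm1 := Finset.mem_filter.1 hv₁
          have hm := Finset.mem_filter.1 hv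
          have hα1 : α v₁ ≠ 0 := fun hz => hm1.2 (by rw [hz]; ring)
          have hβ1 : β (v₁⁻¹*g) ≠ 0 := fun hz => hm1.2 (by rw [hz]; ring)
          have hαv : α v ≠ 0 := fun hz => hm.2 (by rw [hz]; ring)
          have hβv : β (v⁻¹*g) ≠ 0 := fun hz => hm.2 (by rw [hz]; ring)
          have b1 := hαs v₁ hα1
          have b2 := hβs _ hβ1
          have b3 := hαs v hαv
          have b4 := hβs _ hβv
          have b5 := hG g hg
          have dv1g : d v₁ g = d 1 (v₁⁻¹*g) := by
            have := hd_inv v₁⁻¹ v₁ g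
            simpa using this.symm
          have dvg : d v g = d 1 (v⁻¹*g) := by
            have := hd_inv v⁻¹ v g
            simpa using this.symm
          have hsym1 : d v₁ 1 = d 1 v₁ := hd_symm _ _
          have hsym2 : d v 1 = d 1 v := hd_symm _ _
          rw [abs_le] at b1 b2 b3 b4 b5
          have := htwo g v₁ v (w + w'/2) (2*w)
            (by rw [hsym1, dv1g]; linarith [b1.1, b1.2, b2.1, b2.2, b5.1, b5.2])
            (by rw [hsym2, dvg]; linarith [b3.1, b3.2, b4.1, b4.2, b5.1, b5.2])
            (by linarith [b1.1, b1.2, b3.1, b3.2])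
            (by linarith [b1.1, b1.2, b3.1, b3.2])
          linarith [this]
      have e2 : (∑ v ∈ Sg, α v * β (v⁻¹*g))^2 ≤
          (Sg.card : ℝ) * ∑ v ∈ Sg, (α v * β (v⁻¹*g))^2 :=
        sq_sum_le_card_mul_sum_sq
      have e3 : ∑ v ∈ Sg, (α v * β (v⁻¹*g))^2 ≤ ∑ v ∈ Sα, α v^2 * β (v⁻¹*g)^2 := by
        have : ∀ v, (α v * β (v⁻¹*g))^2 = α v^2 * β (v⁻¹*g)^2 := fun v => by ring
        simp_rw [this]
        exact Finset.sum_le_sum_of_subset_of_nonneg (Finset.filter_subset _ _)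
          (fun v _ _ => by positivity)
      have hnn2 : (0:ℝ) ≤ ∑ v ∈ Sg, (α v * β (v⁻¹*g))^2 :=
        Finset.sum_nonneg fun v _ => sq_nonneg _
      calc (∑ v ∈ Sα, α v * β (v⁻¹*g))^2 = (∑ v ∈ Sg, α v * β (v⁻¹*g))^2 := by rw [e1]
        _ ≤ (Sg.card : ℝ) * ∑ v ∈ Sg, (α v * β (v⁻¹*g))^2 := e2
        _ ≤ (K * ω ^ (6*w + 2*w' + 2*δ)) * ∑ v ∈ Sg, (α v * β (v⁻¹*g))^2 :=
            mul_le_mul_of_nonneg_right hcard hnn2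
        _ ≤ _ := mul_le_mul_of_nonneg_left e3 (le_of_lt hN1)
    calc ∑ g ∈ G, (∑ v ∈ Sα, α v * β (v⁻¹*g))^2
        ≤ ∑ g ∈ G, (K * ω ^ (6*w + 2*w' + 2*δ)) * ∑ v ∈ Sα, α v^2 * β (v⁻¹*g)^2 :=
          Finset.sum_le_sum key
      _ = (K * ω ^ (6*w + 2*w' + 2*δ)) * ∑ v ∈ Sα, α v^2 * ∑ g ∈ G, β (v⁻¹*g)^2 := by
          rw [← Finset.mul_sum, Finset.sum_comm]
          congr 1
          exact Finset.sum_congr rfl (fun v _ => by rw [Finset.mul_sum])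
      _ ≤ _ := by
          apply mul_le_mul_of_nonneg_left _ (le_of_lt hN1)
          have hbd : ∀ v ∈ Sα, α v^2 * ∑ g ∈ G, β (v⁻¹*g)^2 ≤ α v^2 * ∑ z ∈ Sβ, β z^2 := by
            intro v _
            apply mul_le_mul_of_nonneg_left _ (sq_nonneg (α v))
            calc ∑ g ∈ G, β (v⁻¹*g)^2 = ∑ z ∈ G.image (fun g => v⁻¹*g), β z^2 := by
                  rw [Finset.sum_image (fun a _ b _ hab => by
                    simpa using mul_left_cancel hab)]
              _ ≤ ∑ z ∈ Sβ, β z^2 := sum_le_of_support' _ (fun z => sq_nonneg _)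
                  (fun z hz => hβS z (fun h0 => hz (by rw [h0]; ring)))
          calc ∑ v ∈ Sα, α v^2 * ∑ g ∈ G, β (v⁻¹*g)^2
              ≤ ∑ v ∈ Sα, α v^2 * ∑ z ∈ Sβ, β z^2 := Finset.sum_le_sum hbd
            _ = _ := by rw [← Finset.sum_mul]

  -- the constant
  set Λ : ℝ := max h 0 + max h' 0 + max h'' 0 + δ + c + 1 with hΛdef
  have mh1 : h ≤ max h 0 := le_max_left _ _
  have mh2 : (0:ℝ) ≤ max h 0 := le_max_right _ _
  have mh3 : h' ≤ max h' 0 := le_max_left _ _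
  have mh4 : (0:ℝ) ≤ max h' 0 := le_max_right _ _
  have mh5 : h'' ≤ max h'' 0 := le_max_left _ _
  have mh6 : (0:ℝ) ≤ max h'' 0 := le_max_right _ _
  have hΛ1 : 1 ≤ Λ := by rw [hΛdef]; linarith
  have hΛ0 : 0 ≤ Λ := by linarith
  have hδΛ : δ + c + 1 ≤ Λ := by rw [hΛdef]; linarith
  refine ⟨K * ω ^ (100*Λ) * Real.sqrt (K * ω ^ (1000*Λ)), ?_⟩
  intro R R' R'' φ ψ hφfin hψfin hφA hψA
  have hCnn : 0 ≤ K * ω ^ (100*Λ) * Real.sqrt (K * ω ^ (1000*Λ)) := by positivity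
  -- rough geodesics selection
  choose ℓf γf hℓ0 hγ0 hγl hγd using hrough
  set t₀ : ℝ := (R + R' - R'')/2 with ht₀def
  set p₀ : ℝ := (R + R'' - R')/2 with hp₀def
  set q₀ : ℝ := (R' + R'' - R)/2 with hq₀def
  set afun : Γ → Γ := fun y => γf 1 y (max 0 (min t₀ (ℓf 1 y))) with hafun
  set vfun : Γ → Γ := fun x => γf 1 x (max 0 (min p₀ (ℓf 1 x))) with hvfun
  -- finite supports
  set Sφ : Finset Γ := hφfin.toFinset with hSφdef
  set Sψ : Finset Γ := hψfin.toFinset with hSψdef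
  have hSφmem : ∀ x : Γ, x ∈ Sφ ↔ φ x ≠ 0 := fun x => by
    rw [hSφdef, Set.Finite.mem_toFinset]; exact Iff.rfl
  have hSψmem : ∀ x : Γ, x ∈ Sψ ↔ ψ x ≠ 0 := fun x => by
    rw [hSψdef, Set.Finite.mem_toFinset]; exact Iff.rfl
  have hconv : ∀ g : Γ, (∑' x, φ x * ψ (x⁻¹*g)) = ∑ x ∈ Sφ, φ x * ψ (x⁻¹*g) := by
    intro g
    apply tsum_eq_sum
    intro x hx
    have : φ x = 0 := by
      by_contra hne
      exact hx ((hSφmem x).2 hne)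
    rw [this, zero_mul]
  have hφ2 : (∑' g : Γ, ‖φ g‖^2) = ∑ g ∈ Sφ, ‖φ g‖^2 := by
    apply tsum_eq_sum
    intro g hg
    have : φ g = 0 := by
      by_contra hne
      exact hg ((hSφmem g).2 hne)
    rw [this, norm_zero]; ring
  have hψ2 : (∑' g : Γ, ‖ψ g‖^2) = ∑ g ∈ Sψ, ‖ψ g‖^2 := by
    apply tsum_eq_sum
    intro g hg
    have : ψ g = 0 := by
      by_contra hne
      exact hg ((hSψmem g).2 hne)
    rw [this, norm_zero]; ring
  have hφ2nn : (0:ℝ) ≤ ∑ g ∈ Sφ, ‖φ g‖^2 := Finset.sum_nonneg fun g _ => sq_nonneg _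
  have hψ2nn : (0:ℝ) ≤ ∑ g ∈ Sψ, ‖ψ g‖^2 := Finset.sum_nonneg fun g _ => sq_nonneg _
  set P : Finset Γ := Sφ.biUnion (fun x => Sψ.image (fun y => x * y)) with hPdef
  have hPmem : ∀ g : Γ, (∃ x, φ x ≠ 0 ∧ ψ (x⁻¹*g) ≠ 0) → g ∈ P := by
    intro g ⟨x, hx, hy⟩
    rw [hPdef, Finset.mem_biUnion]
    exact ⟨x, (hSφmem x).2 hx, Finset.mem_image.2 ⟨x⁻¹*g, (hSψmem _).2 hy, by group⟩⟩
  set G'' : Finset Γ := P.filter (fun g => d 1 g ∈ Set.Icc (R'' - h'') (R'' + h'')) with hGdef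
  have houter : (∑' g : Γ, (if d 1 g ∈ Set.Icc (R'' - h'') (R'' + h'') then
      ‖∑' x, φ x * ψ (x⁻¹ * g)‖ ^ 2 else 0)) =
      ∑ g ∈ G'', ‖∑ x ∈ Sφ, φ x * ψ (x⁻¹*g)‖^2 := by
    have e1 : (∑' g : Γ, (if d 1 g ∈ Set.Icc (R'' - h'') (R'' + h'') then
        ‖∑' x, φ x * ψ (x⁻¹ * g)‖ ^ 2 else 0)) =
        ∑ g ∈ P, (if d 1 g ∈ Set.Icc (R'' - h'') (R'' + h'') then
        ‖∑ x ∈ Sφ, φ x * ψ (x⁻¹*g)‖ ^ 2 else 0) := by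
      simp_rw [hconv]
      apply tsum_eq_sum
      intro g hg
      have hz : (∑ x ∈ Sφ, φ x * ψ (x⁻¹*g)) = 0 := by
        apply Finset.sum_eq_zero
        intro x hx
        by_contra hne
        obtain ⟨hne1, hne2⟩ := mul_ne_zero_iff.mp hne
        exact hg (hPmem g ⟨x, hne1, hne2⟩)
      rw [hz, norm_zero]
      simp
    rw [e1, hGdef, Finset.sum_filter]
  rw [houter, hφ2, hψ2]
  by_cases hW : ∃ g ∈ G'', ∃ x, φ x ≠ 0 ∧ ψ (x⁻¹*g) ≠ 0
  case neg =>
    push_neg at hW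
    have hz : ∑ g ∈ G'', ‖∑ x ∈ Sφ, φ x * ψ (x⁻¹*g)‖^2 = 0 := by
      apply Finset.sum_eq_zero
      intro g hg
      have : (∑ x ∈ Sφ, φ x * ψ (x⁻¹*g)) = 0 := by
        apply Finset.sum_eq_zero
        intro x hx
        by_cases h0 : φ x = 0
        · simp [h0]
        · simp [hW g hg x h0]
      rw [this, norm_zero]; ring
    rw [hz, Real.sqrt_zero]
    positivity

  case pos =>
    obtain ⟨g₀, hg₀G, x₀, hφx₀, hψy₀⟩ := hW
    have hg₀ann := (Finset.mem_filter.1 hg₀G).2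
    have hx₀A := hφA x₀ hφx₀
    have hy₀A := hψA _ hψy₀
    rw [Set.mem_Icc] at hg₀ann hx₀A hy₀A
    have dx₀g₀ : d x₀ g₀ = d 1 (x₀⁻¹ * g₀) := by
      have := hd_inv x₀⁻¹ x₀ g₀; simpa using this.symm
    have tri1 : d 1 g₀ ≤ d 1 x₀ + d 1 (x₀⁻¹*g₀) := by
      rw [← dx₀g₀]; exact hd_tri 1 x₀ g₀
    have tri2 : d 1 x₀ ≤ d 1 g₀ + d 1 (x₀⁻¹*g₀) := by
      have := hd_tri 1 g₀ x₀
      rw [hd_symm g₀ x₀, dx₀g₀] at this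
      exact this
    have tri3 : d 1 (x₀⁻¹*g₀) ≤ d 1 x₀ + d 1 g₀ := by
      calc d 1 (x₀⁻¹*g₀) = d x₀ g₀ := dx₀g₀.symm
        _ ≤ d x₀ 1 + d 1 g₀ := hd_tri _ _ _
        _ = d 1 x₀ + d 1 g₀ := by rw [hd_symm]
    have hh1 : 0 ≤ h := by linarith
    have hh2 : 0 ≤ h' := by linarith
    have hh3 : 0 ≤ h'' := by linarith
    have hhΛ : h ≤ Λ := by rw [hΛdef]; linarith
    have hh'Λ : h' ≤ Λ := by rw [hΛdef]; linarith
    have hh''Λ : h'' ≤ Λ := by rw [hΛdef]; linarith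
    have hcΛ : c ≤ Λ := by rw [hΛdef]; linarith
    have hδΛ' : δ ≤ Λ := by rw [hΛdef]; linarith
    have hsum3 : h + h' + h'' ≤ Λ := by rw [hΛdef]; linarith
    have hRb1 : R'' - R - R' ≤ Λ := by linarith
    have hRb2 : R - R' - R'' ≤ Λ := by linarith
    have hRb3 : R' - R - R'' ≤ Λ := by linarith
    -- per-element geodesic point facts
    have hyfacts : ∀ y : Γ, ψ y ≠ 0 →
        |d 1 (afun y) - t₀| ≤ 4*Λ ∧ |d (afun y) y - (d 1 y - t₀)| ≤ 5*Λ := by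
      intro y hy
      have hyA := hψA y hy
      rw [Set.mem_Icc] at hyA
      have hℓnn : 0 ≤ ℓf 1 y := hℓ0 1 y
      have h0m : (0:ℝ) ∈ Set.Icc 0 (ℓf 1 y) := ⟨le_refl _, hℓnn⟩
      have hℓm : ℓf 1 y ∈ Set.Icc 0 (ℓf 1 y) := ⟨hℓnn, le_refl _⟩
      have hy1 : |d 1 y - ℓf 1 y| ≤ c := by
        have h1 := hγd 1 y 0 (ℓf 1 y) h0m hℓm
        rw [hγ0 1 y, hγl 1 y] at h1
        have e : |(0:ℝ) - ℓf 1 y| = ℓf 1 y := by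
          rw [zero_sub, abs_neg, abs_of_nonneg hℓnn]
        rw [e] at h1; exact h1
      rw [abs_le] at hy1
      set τ := max 0 (min t₀ (ℓf 1 y)) with hτdef
      have hτ0 : 0 ≤ τ := le_max_left 0 _
      have hτℓ : τ ≤ ℓf 1 y := max_le hℓnn (min_le_right _ _)
      have hτlow : t₀ - 3*Λ ≤ τ := by
        refine le_trans (le_min ?_ ?_) (le_max_right 0 _)
        · linarith
        · linarith
      have hτhigh : τ ≤ t₀ + Λ := by
        apply max_le
        · linarith
        · linarith [min_le_left t₀ (ℓf 1 y)]
      have hτm : τ ∈ Set.Icc 0 (ℓf 1 y) := ⟨hτ0, hτℓ⟩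
      have ha1 : |d 1 (afun y) - τ| ≤ c := by
        have h1 := hγd 1 y 0 τ h0m hτm
        rw [hγ0 1 y] at h1
        have e : |(0:ℝ) - τ| = τ := by rw [zero_sub, abs_neg, abs_of_nonneg hτ0]
        rw [e] at h1
        simpa [hafun] using h1
      have ha2 : |d (afun y) y - (ℓf 1 y - τ)| ≤ c := by
        have h1 := hγd 1 y τ (ℓf 1 y) hτm hℓm
        rw [hγl 1 y] at h1
        have e : |τ - ℓf 1 y| = ℓf 1 y - τ := by
          rw [abs_sub_comm, abs_of_nonneg (by linarith)]
        rw [e] at h1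
        simpa [hafun] using h1
      rw [abs_le] at ha1 ha2
      constructor <;> rw [abs_le] <;> constructor <;> linarith
    have hxfacts : ∀ x : Γ, φ x ≠ 0 →
        |d 1 (vfun x) - p₀| ≤ 4*Λ ∧ |d x (vfun x) - (d 1 x - p₀)| ≤ 5*Λ := by
      intro x hx
      have hxA := hφA x hx
      rw [Set.mem_Icc] at hxA
      have hℓnn : 0 ≤ ℓf 1 x := hℓ0 1 x
      have h0m : (0:ℝ) ∈ Set.Icc 0 (ℓf 1 x) := ⟨le_refl _, hℓnn⟩
      have hℓm : ℓf 1 x ∈ Set.Icc 0 (ℓf 1 x) := ⟨hℓnn, le_refl _⟩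
      have hy1 : |d 1 x - ℓf 1 x| ≤ c := by
        have h1 := hγd 1 x 0 (ℓf 1 x) h0m hℓm
        rw [hγ0 1 x, hγl 1 x] at h1
        have e : |(0:ℝ) - ℓf 1 x| = ℓf 1 x := by
          rw [zero_sub, abs_neg, abs_of_nonneg hℓnn]
        rw [e] at h1; exact h1
      rw [abs_le] at hy1
      set τ := max 0 (min p₀ (ℓf 1 x)) with hτdef
      have hτ0 : 0 ≤ τ := le_max_left 0 _
      have hτℓ : τ ≤ ℓf 1 x := max_le hℓnn (min_le_right _ _)
      have hτlow : p₀ - 3*Λ ≤ τ := by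
        refine le_trans (le_min ?_ ?_) (le_max_right 0 _)
        · linarith
        · linarith
      have hτhigh : τ ≤ p₀ + Λ := by
        apply max_le
        · linarith
        · linarith [min_le_left p₀ (ℓf 1 x)]
      have hτm : τ ∈ Set.Icc 0 (ℓf 1 x) := ⟨hτ0, hτℓ⟩
      have ha1 : |d 1 (vfun x) - τ| ≤ c := by
        have h1 := hγd 1 x 0 τ h0m hτm
        rw [hγ0 1 x] at h1
        have e : |(0:ℝ) - τ| = τ := by rw [zero_sub, abs_neg, abs_of_nonneg hτ0]
        rw [e] at h1
        simpa [hvfun] using h1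
      have ha2 : |d (vfun x) x - (ℓf 1 x - τ)| ≤ c := by
        have h1 := hγd 1 x τ (ℓf 1 x) hτm hℓm
        rw [hγl 1 x] at h1
        have e : |τ - ℓf 1 x| = ℓf 1 x - τ := by
          rw [abs_sub_comm, abs_of_nonneg (by linarith)]
        rw [e] at h1
        simpa [hvfun] using h1
      rw [abs_le] at ha1 ha2
      refine ⟨?_, ?_⟩
      · rw [abs_le]; constructor <;> linarith
      · rw [hd_symm x (vfun x), abs_le]; constructor <;> linarith
    -- the core geometric estimate
    have hcore : ∀ g x : Γ, d 1 g ∈ Set.Icc (R''-h'') (R''+h'') → φ x ≠ 0 → ψ (x⁻¹*g) ≠ 0 →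
        d 1 ((vfun x)⁻¹ * (x * afun (x⁻¹*g))) ≤ 100*Λ := by
      intro g x hgann hφx hψy
      rw [Set.mem_Icc] at hgann
      obtain ⟨hv1, hv2⟩ := hxfacts x hφx
      obtain ⟨ha1, ha2⟩ := hyfacts (x⁻¹*g) hψy
      have hxA := hφA x hφx
      have hyA := hψA _ hψy
      rw [Set.mem_Icc] at hxA hyA
      have dvz : d 1 ((vfun x)⁻¹ * (x * afun (x⁻¹*g))) = d (vfun x) (x * afun (x⁻¹*g)) := by
        have := hd_inv (vfun x)⁻¹ (vfun x) (x * afun (x⁻¹*g))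
        simpa using this
      rw [dvz]
      have dxz : d x (x * afun (x⁻¹*g)) = d 1 (afun (x⁻¹*g)) := by
        have := hd_inv x 1 (afun (x⁻¹*g))
        simpa using this
      have dzg : d (x * afun (x⁻¹*g)) g = d (afun (x⁻¹*g)) (x⁻¹*g) := by
        have := hd_inv x (afun (x⁻¹*g)) (x⁻¹*g)
        rw [mul_inv_cancel_left] at this
        exact this
      have dxg : d x g = d 1 (x⁻¹*g) := by
        have := hd_inv x⁻¹ x g
        simpa using this.symm
      rw [abs_le] at hv1 hv2 ha1 ha2
      have b1a : d x (x * afun (x⁻¹*g)) ≤ t₀ + 4*Λ := by rw [dxz]; linarith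
      have b1b : t₀ - 4*Λ ≤ d x (x * afun (x⁻¹*g)) := by rw [dxz]; linarith
      have b2a : d (x * afun (x⁻¹*g)) g ≤ q₀ + 6*Λ := by rw [dzg]; linarith
      have b2b : q₀ - 6*Λ ≤ d (x * afun (x⁻¹*g)) g := by rw [dzg]; linarith
      have gp1a : (d x 1 + d x g - d 1 g)/2 ≤ t₀ + (3/2)*Λ := by
        rw [hd_symm x 1, dxg]; linarith
      have gp1b : t₀ - (3/2)*Λ ≤ (d x 1 + d x g - d 1 g)/2 := by
        rw [hd_symm x 1, dxg]; linarith
      have gp2 : t₀ - 6*Λ ≤ (d x g + d x (x * afun (x⁻¹*g)) - d g (x * afun (x⁻¹*g)))/2 := by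
        rw [dxg, hd_symm g (x * afun (x⁻¹*g))]
        linarith
      have H := hhyp' x 1 (x * afun (x⁻¹*g)) g
      have gp3 : t₀ - 7*Λ ≤ (d x 1 + d x (x * afun (x⁻¹*g)) - d 1 (x * afun (x⁻¹*g)))/2 := by
        have hmin : t₀ - 6*Λ ≤
            min ((d x 1 + d x g - d 1 g)/2)
              ((d x g + d x (x * afun (x⁻¹*g)) - d g (x * afun (x⁻¹*g)))/2) :=
          le_min (by linarith) gp2
        linarith [H]
      have bz1 : d 1 (x * afun (x⁻¹*g)) ≤ p₀ + 19*Λ := by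
        have hx1 : d x 1 = d 1 x := hd_symm x 1
        have : p₀ = R - t₀ := by rw [hp₀def, ht₀def]; ring
        linarith
      have bz2 : p₀ - 7*Λ ≤ d 1 (x * afun (x⁻¹*g)) := by
        have htr := hd_tri 1 (x * afun (x⁻¹*g)) g
        have : p₀ = R'' - q₀ := by rw [hp₀def, hq₀def]; ring
        linarith
      have gp4 : (d (x * afun (x⁻¹*g)) 1 + d (x * afun (x⁻¹*g)) x - d 1 x)/2 ≤ 12*Λ := by
        rw [hd_symm _ 1, hd_symm (x * afun (x⁻¹*g)) x]
        linarith
      have gp5 : (d (vfun x) 1 + d (vfun x) x - d 1 x)/2 ≤ 12*Λ := by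
        rw [hd_symm _ 1, hd_symm (vfun x) x]
        linarith
      have e2a : d 1 (vfun x) ≤ d 1 (x * afun (x⁻¹*g)) + 23*Λ := by linarith
      have e2b : d 1 (x * afun (x⁻¹*g)) ≤ d 1 (vfun x) + 23*Λ := by linarith
      have := htwo x (vfun x) (x * afun (x⁻¹*g)) (12*Λ) (23*Λ) gp5 gp4 e2a e2b
      linarith
    -- the ball B of radius 100Λ
    obtain ⟨B, hBcoe, hBcard⟩ := hgrowth 1 (100*Λ)
    have hBmem : ∀ b : Γ, d 1 b ≤ 100*Λ → b ∈ B := by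
      intro b hb
      rw [← Finset.mem_coe, hBcoe]; exact hb
    have hBmem' : ∀ b ∈ B, d 1 b ≤ 100*Λ := by
      intro b hb
      rw [← Finset.mem_coe, hBcoe] at hb; exact hb
    -- fiber functions
    set V : Finset Γ := Sφ.image vfun with hVdef
    set W : Finset Γ := Sψ.image (fun y => (afun y)⁻¹ * y) with hWdef
    set Φ : Γ → ℝ := fun v₀ =>
      Real.sqrt (∑ x ∈ Sφ.filter (fun x => vfun x = v₀), ‖φ x‖^2) with hΦdef
    set Ψ : Γ → ℝ := fun w₀ =>
      Real.sqrt (∑ y ∈ Sψ.filter (fun y => (afun y)⁻¹*y = w₀), ‖ψ y‖^2) with hΨdef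
    have hΦnn : ∀ v₀, 0 ≤ Φ v₀ := fun v₀ => Real.sqrt_nonneg _
    have hΨnn : ∀ w₀, 0 ≤ Ψ w₀ := fun w₀ => Real.sqrt_nonneg _
    have hΦsq : ∀ v₀, Φ v₀^2 = ∑ x ∈ Sφ.filter (fun x => vfun x = v₀), ‖φ x‖^2 := fun v₀ =>
      Real.sq_sqrt (Finset.sum_nonneg fun x _ => sq_nonneg _)
    have hΨsq : ∀ w₀, Ψ w₀^2 = ∑ y ∈ Sψ.filter (fun y => (afun y)⁻¹*y = w₀), ‖ψ y‖^2 :=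
      fun w₀ => Real.sq_sqrt (Finset.sum_nonneg fun y _ => sq_nonneg _)
    have hΦsum : ∑ v₀ ∈ V, Φ v₀^2 = ∑ x ∈ Sφ, ‖φ x‖^2 := by
      simp_rw [hΦsq]
      exact Finset.sum_fiberwise_of_maps_to (fun x hx => Finset.mem_image_of_mem vfun hx) _
    have hΨsum : ∑ w₀ ∈ W, Ψ w₀^2 = ∑ y ∈ Sψ, ‖ψ y‖^2 := by
      simp_rw [hΨsq]
      exact Finset.sum_fiberwise_of_maps_to (fun y hy => Finset.mem_image_of_mem _ hy) _
    have hΦsupp : ∀ v₀, Φ v₀ ≠ 0 → |d 1 v₀ - p₀| ≤ 4*Λ := by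
      intro v₀ hne
      have hsum : ∑ x ∈ Sφ.filter (fun x => vfun x = v₀), ‖φ x‖^2 ≠ 0 := by
        intro h0
        apply hne
        rw [hΦdef]
        simp only [h0, Real.sqrt_zero]
      obtain ⟨x, hx1, _⟩ := Finset.exists_ne_zero_of_sum_ne_zero hsum
      have hxm := Finset.mem_filter.1 hx1
      have := (hxfacts x ((hSφmem x).1 hxm.1)).1
      rw [hxm.2] at this; exact this
    have hΨW : ∀ w₀, Ψ w₀ ≠ 0 → w₀ ∈ W := by
      intro w₀ hne
      have hsum : ∑ y ∈ Sψ.filter (fun y => (afun y)⁻¹*y = w₀), ‖ψ y‖^2 ≠ 0 := by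
        intro h0
        apply hne
        rw [hΨdef]
        simp only [h0, Real.sqrt_zero]
      obtain ⟨y, hy1, _⟩ := Finset.exists_ne_zero_of_sum_ne_zero hsum
      have hym := Finset.mem_filter.1 hy1
      rw [hWdef]
      exact hym.2 ▸ Finset.mem_image_of_mem _ hym.1
    have hΨsupp : ∀ w₀, Ψ w₀ ≠ 0 → |d 1 w₀ - q₀| ≤ 6*Λ := by
      intro w₀ hne
      have hsum : ∑ y ∈ Sψ.filter (fun y => (afun y)⁻¹*y = w₀), ‖ψ y‖^2 ≠ 0 := by
        intro h0
        apply hne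
        rw [hΨdef]
        simp only [h0, Real.sqrt_zero]
      obtain ⟨y, hy1, _⟩ := Finset.exists_ne_zero_of_sum_ne_zero hsum
      have hym := Finset.mem_filter.1 hy1
      have hyne := (hSψmem y).1 hym.1
      have h2 := (hyfacts y hyne).2
      have hyA := hψA y hyne
      rw [Set.mem_Icc] at hyA
      have e : d 1 ((afun y)⁻¹ * y) = d (afun y) y := by
        have := hd_inv (afun y)⁻¹ (afun y) y
        simpa using this
      rw [← hym.2, e]
      rw [abs_le] at h2 ⊢
      have : q₀ = R' - t₀ := by rw [hq₀def, ht₀def]; ring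
      constructor <;> linarith
    -- pointwise bound
    have hpoint : ∀ g ∈ G'', ‖∑ x ∈ Sφ, φ x * ψ (x⁻¹*g)‖ ≤
        ∑ b ∈ B, ∑ v₀ ∈ V, Φ v₀ * Ψ (b⁻¹ * (v₀⁻¹ * g)) := by
      intro g hgm
      have hgann : d 1 g ∈ Set.Icc (R''-h'') (R''+h'') := (Finset.mem_filter.1 hgm).2
      set S := Sφ.filter (fun x => ψ (x⁻¹*g) ≠ 0) with hSdef
      have step1 : ‖∑ x ∈ Sφ, φ x * ψ (x⁻¹*g)‖ ≤ ∑ x ∈ S, ‖φ x‖ * ‖ψ (x⁻¹*g)‖ := by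
        calc ‖∑ x ∈ Sφ, φ x * ψ (x⁻¹*g)‖ ≤ ∑ x ∈ Sφ, ‖φ x * ψ (x⁻¹*g)‖ := norm_sum_le _ _
          _ = ∑ x ∈ Sφ, ‖φ x‖ * ‖ψ (x⁻¹*g)‖ := by simp_rw [norm_mul]
          _ = ∑ x ∈ S, ‖φ x‖ * ‖ψ (x⁻¹*g)‖ := by
              rw [hSdef]
              refine (Finset.sum_filter_of_ne ?_).symm
              intro x _ hne h0
              exact hne (by rw [h0, norm_zero, mul_zero])
      have hmaps : ∀ x ∈ S, (vfun x, (vfun x)⁻¹ * (x * afun (x⁻¹*g))) ∈ V ×ˢ B := by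
        intro x hx
        have hxm := Finset.mem_filter.1 hx
        refine Finset.mem_product.2 ⟨Finset.mem_image_of_mem _ hxm.1, hBmem _ ?_⟩
        exact hcore g x hgann ((hSφmem x).1 hxm.1) hxm.2
      have step2 : ∑ x ∈ S, ‖φ x‖ * ‖ψ (x⁻¹*g)‖ =
          ∑ pr ∈ V ×ˢ B, ∑ x ∈ S.filter
            (fun x => (vfun x, (vfun x)⁻¹ * (x * afun (x⁻¹*g))) = pr),
            ‖φ x‖ * ‖ψ (x⁻¹*g)‖ :=
        (Finset.sum_fiberwise_of_maps_to hmaps _).symm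
      have step3 : ∀ pr ∈ V ×ˢ B,
          (∑ x ∈ S.filter
            (fun x => (vfun x, (vfun x)⁻¹ * (x * afun (x⁻¹*g))) = pr),
            ‖φ x‖ * ‖ψ (x⁻¹*g)‖)
          ≤ Φ pr.1 * Ψ (pr.2⁻¹ * (pr.1⁻¹ * g)) := by
        intro pr _
        set T := S.filter (fun x => (vfun x, (vfun x)⁻¹ * (x * afun (x⁻¹*g))) = pr) with hTdef
        have cs : ∑ x ∈ T, ‖φ x‖ * ‖ψ (x⁻¹*g)‖ ≤
            Real.sqrt (∑ x ∈ T, ‖φ x‖^2) * Real.sqrt (∑ x ∈ T, ‖ψ (x⁻¹*g)‖^2) :=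
          Real.sum_mul_le_sqrt_mul_sqrt T _ _
        have sub1 : Real.sqrt (∑ x ∈ T, ‖φ x‖^2) ≤ Φ pr.1 := by
          rw [hΦdef]
          apply Real.sqrt_le_sqrt
          apply Finset.sum_le_sum_of_subset_of_nonneg
          · intro x hxT
            have hxm := Finset.mem_filter.1 hxT
            have hxS := Finset.mem_filter.1 hxm.1
            exact Finset.mem_filter.2 ⟨hxS.1, congrArg Prod.fst hxm.2⟩
          · intro x _ _; positivity
        have sub2 : Real.sqrt (∑ x ∈ T, ‖ψ (x⁻¹*g)‖^2) ≤ Ψ (pr.2⁻¹ * (pr.1⁻¹ * g)) := by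
          rw [hΨdef]
          apply Real.sqrt_le_sqrt
          have einj : ∀ a ∈ T, ∀ b ∈ T, a⁻¹*g = b⁻¹*g → a = b := by
            intro a _ b _ hab
            have := mul_right_cancel hab
            exact inv_injective this
          calc ∑ x ∈ T, ‖ψ (x⁻¹*g)‖^2
              = ∑ y ∈ T.image (fun x => x⁻¹*g), ‖ψ y‖^2 := (Finset.sum_image (f := fun y => ‖ψ y‖^2) einj).symm
            _ ≤ ∑ y ∈ Sψ.filter (fun y => (afun y)⁻¹*y = pr.2⁻¹ * (pr.1⁻¹ * g)), ‖ψ y‖^2 := by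
                apply Finset.sum_le_sum_of_subset_of_nonneg _ (fun y _ _ => by positivity)
                intro y hy
                obtain ⟨x, hxT, hxy⟩ := Finset.mem_image.1 hy
                have hxm := Finset.mem_filter.1 hxT
                have hxS := Finset.mem_filter.1 hxm.1
                have h1 : vfun x = pr.1 := congrArg Prod.fst hxm.2
                have h2 : (vfun x)⁻¹ * (x * afun (x⁻¹*g)) = pr.2 := congrArg Prod.snd hxm.2
                refine Finset.mem_filter.2 ⟨?_, ?_⟩
                · rw [← hxy]; exact (hSψmem _).2 hxS.2
                · rw [← hxy, ← h1, ← h2]; group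
        calc (∑ x ∈ T, ‖φ x‖ * ‖ψ (x⁻¹*g)‖) ≤ _ := cs
          _ ≤ Φ pr.1 * Ψ (pr.2⁻¹ * (pr.1⁻¹ * g)) :=
              mul_le_mul sub1 sub2 (Real.sqrt_nonneg _) (hΦnn _)
      calc ‖∑ x ∈ Sφ, φ x * ψ (x⁻¹*g)‖ ≤ ∑ x ∈ S, ‖φ x‖ * ‖ψ (x⁻¹*g)‖ := step1
        _ = _ := step2
        _ ≤ ∑ pr ∈ V ×ˢ B, Φ pr.1 * Ψ (pr.2⁻¹ * (pr.1⁻¹ * g)) := Finset.sum_le_sum step3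
        _ = ∑ v₀ ∈ V, ∑ b ∈ B, Φ v₀ * Ψ (b⁻¹ * (v₀⁻¹ * g)) := by rw [Finset.sum_product]
        _ = ∑ b ∈ B, ∑ v₀ ∈ V, Φ v₀ * Ψ (b⁻¹ * (v₀⁻¹ * g)) := Finset.sum_comm
    -- assemble
    have hFnn : ∀ (b : Γ) (g' : Γ), 0 ≤ ∑ v₀ ∈ V, Φ v₀ * Ψ (b⁻¹ * (v₀⁻¹ * g')) := fun b g' =>
      Finset.sum_nonneg fun v₀ _ => mul_nonneg (hΦnn _) (hΨnn _)
    have stepA : Real.sqrt (∑ g ∈ G'', ‖∑ x ∈ Sφ, φ x * ψ (x⁻¹*g)‖^2) ≤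
        Real.sqrt (∑ g ∈ G'', (∑ b ∈ B, ∑ v₀ ∈ V, Φ v₀ * Ψ (b⁻¹ * (v₀⁻¹ * g)))^2) := by
      apply Real.sqrt_le_sqrt
      apply Finset.sum_le_sum
      intro g hg
      exact pow_le_pow_left₀ (norm_nonneg _) (hpoint g hg) 2
    have stepB := minkowski_finset B G''
      (fun b g => ∑ v₀ ∈ V, Φ v₀ * Ψ (b⁻¹ * (v₀⁻¹ * g))) (fun b g => hFnn b g)
    have hGann : ∀ g ∈ G'', |d 1 g - (p₀ + q₀)| ≤ Λ := by
      intro g hg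
      have hgi := (Finset.mem_filter.1 hg).2
      rw [Set.mem_Icc] at hgi
      have : p₀ + q₀ = R'' := by rw [hp₀def, hq₀def]; ring
      rw [abs_le, this]
      constructor <;> linarith
    have stepC : ∀ b ∈ B, ∑ g ∈ G'', (∑ v₀ ∈ V, Φ v₀ * Ψ (b⁻¹ * (v₀⁻¹ * g)))^2 ≤
        (K * ω ^ (1000*Λ)) * ((∑ x ∈ Sφ, ‖φ x‖^2) * (∑ y ∈ Sψ, ‖ψ y‖^2)) := by
      intro b hb
      have hb100 := hBmem' b hb
      have hβsupp : ∀ z, Ψ (b⁻¹*z) ≠ 0 → |d 1 z - q₀| ≤ 106*Λ := by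
        intro z hz
        have h1 := hΨsupp _ hz
        have e : d b z = d 1 (b⁻¹*z) := by
          have := hd_inv b⁻¹ b z
          simpa using this.symm
        have t1 : d 1 z ≤ d 1 b + d 1 (b⁻¹*z) := by rw [← e]; exact hd_tri 1 b z
        have t2 : d 1 (b⁻¹*z) ≤ d 1 b + d 1 z := by
          rw [← e]
          have := hd_tri b 1 z
          rw [hd_symm b 1] at this
          exact this
        rw [abs_le] at h1 ⊢
        constructor <;> linarith [hdnn 1 b]
      have halign := haligned p₀ q₀ (106*Λ) Λ Φ (fun z => Ψ (b⁻¹*z)) V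
        (W.image (fun w => b*w)) G''
        hΦnn (fun z => hΨnn _)
        (fun v hv => le_trans (hΦsupp v hv) (by linarith))
        hβsupp
        (fun z hz => Finset.mem_image.2 ⟨b⁻¹*z, hΨW _ hz, by group⟩)
        hGann
      have eW : ∑ z ∈ W.image (fun w => b*w), Ψ (b⁻¹*z)^2 = ∑ y ∈ Sψ, ‖ψ y‖^2 := by
        rw [Finset.sum_image (fun a _ b' _ hab => mul_left_cancel hab)]
        simp_rw [inv_mul_cancel_left]
        exact hΨsum
      rw [eW, hΦsum] at halign
      calc ∑ g ∈ G'', (∑ v₀ ∈ V, Φ v₀ * Ψ (b⁻¹ * (v₀⁻¹ * g)))^2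
          ≤ K * ω ^ (6*(106*Λ) + 2*Λ + 2*δ) *
            ((∑ x ∈ Sφ, ‖φ x‖^2) * (∑ y ∈ Sψ, ‖ψ y‖^2)) := halign
        _ ≤ _ := by
            apply mul_le_mul_of_nonneg_right _ (mul_nonneg hφ2nn hψ2nn)
            apply mul_le_mul_of_nonneg_left _ (le_of_lt hK)
            apply Real.rpow_le_rpow_of_exponent_le (le_of_lt hω)
            linarith
    have sqrtsplit :
        Real.sqrt ((K * ω ^ (1000*Λ)) * ((∑ x ∈ Sφ, ‖φ x‖^2) * (∑ y ∈ Sψ, ‖ψ y‖^2)))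
        = Real.sqrt (K * ω ^ (1000*Λ)) *
          (Real.sqrt (∑ x ∈ Sφ, ‖φ x‖^2) * Real.sqrt (∑ y ∈ Sψ, ‖ψ y‖^2)) := by
      rw [Real.sqrt_mul (by positivity), Real.sqrt_mul hφ2nn]
    calc Real.sqrt (∑ g ∈ G'', ‖∑ x ∈ Sφ, φ x * ψ (x⁻¹*g)‖^2)
        ≤ Real.sqrt (∑ g ∈ G'', (∑ b ∈ B, ∑ v₀ ∈ V, Φ v₀ * Ψ (b⁻¹ * (v₀⁻¹ * g)))^2) := stepA
      _ ≤ ∑ b ∈ B, Real.sqrt (∑ g ∈ G'', (∑ v₀ ∈ V, Φ v₀ * Ψ (b⁻¹ * (v₀⁻¹ * g)))^2) := stepB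
      _ ≤ ∑ _b ∈ B, Real.sqrt ((K * ω ^ (1000*Λ)) *
            ((∑ x ∈ Sφ, ‖φ x‖^2) * (∑ y ∈ Sψ, ‖ψ y‖^2))) :=
          Finset.sum_le_sum (fun b hb => Real.sqrt_le_sqrt (stepC b hb))
      _ = (B.card : ℝ) * Real.sqrt ((K * ω ^ (1000*Λ)) *
            ((∑ x ∈ Sφ, ‖φ x‖^2) * (∑ y ∈ Sψ, ‖ψ y‖^2))) := by
          rw [Finset.sum_const, nsmul_eq_mul]
      _ ≤ (K * ω ^ (100*Λ)) * Real.sqrt ((K * ω ^ (1000*Λ)) *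
            ((∑ x ∈ Sφ, ‖φ x‖^2) * (∑ y ∈ Sψ, ‖ψ y‖^2))) :=
          mul_le_mul_of_nonneg_right hBcard (Real.sqrt_nonneg _)
      _ = _ := by rw [sqrtsplit]; ring
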